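/- Let v be a forget node with child u, I_u = I_v ⊎ {i}. Then g(v, c_v, F_v) = min{ g(u, c_u, F_u) : F_u ⊆ E(H[I_u]), F_u ∩ E(H[I_v]) = F_v, c_u restricted to I_v equals c_v }, where the min is over all choices of F_u and of c_u(i) ∈ {0,...,n-1}. -/
import Mathlib


/-- The degree of vertex `i` in `G`. -/
noncomputable def deg {n : ℕ} (G : SimpleGraph (Fin n)) (i : Fin n) : ℕ :=
  (G.neighborSet i).ncard

/-- The edges of `G` both of whose endpoints lie in `S` (the edge set of `G[S]`). -/
def edgesIn {n : ℕ} (G : SimpleGraph (Fin n)) (S : Set (Fin n)) : Set (Sym2 (Fin n)) :=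
  {e | e ∈ G.edgeSet ∧ ∀ i ∈ e, i ∈ S}

/-- `G` is a subgraph of the induced subgraph `H[S]` (viewed as a graph on all of `[n]`):
`G ≤ H` and all edges of `G` lie inside `S`. -/
def SubgraphOn {n : ℕ} (H G : SimpleGraph (Fin n)) (S : Set (Fin n)) : Prop :=
  G ≤ H ∧ ∀ ⦃a b : Fin n⦄, G.Adj a b → a ∈ S ∧ b ∈ S

/-- A (rooted) tree decomposition of a graph `H` on `[n]`: a finite tree `T` with a root,
bags `bag v ⊆ [n]` covering all vertices, every edge of `H` contained in some bag, and for
every vertex `i` the nodes whose bag contains `i` forming a connected (path-closed) set. -/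
structure TreeDecomp (n : ℕ) (H : SimpleGraph (Fin n)) where
  τ : Type
  [finτ : Fintype τ]
  tree : SimpleGraph τ
  isTree : tree.IsTree
  root : τ
  bag : τ → Set (Fin n)
  bag_cover : ∀ i : Fin n, ∃ v, i ∈ bag v
  bag_edge : ∀ ⦃i j : Fin n⦄, H.Adj i j → ∃ v, i ∈ bag v ∧ j ∈ bag v
  bag_conn : ∀ (i : Fin n) (x y : τ) (p : tree.Walk x y), p.IsPath →
    i ∈ bag x → i ∈ bag y → ∀ v ∈ p.support, i ∈ bag v

namespace TreeDecomp

variable {n : ℕ} {H : SimpleGraph (Fin n)} (td : TreeDecomp n H)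

/-- `u` lies in the subtree rooted at `v`: every walk from the root to `u` passes `v`. -/
def desc (v u : td.τ) : Prop := ∀ p : td.tree.Walk td.root u, v ∈ p.support

/-- `u` is a child of `v` in the rooted tree. -/
def child (v u : td.τ) : Prop := td.tree.Adj v u ∧ td.desc v u

/-- `I(T_v)`: the union of all bags over the subtree rooted at `v`. -/
def bags (v : td.τ) : Set (Fin n) := {i | ∃ u, td.desc v u ∧ i ∈ td.bag u}

end TreeDecomp

/-- `g(v, c, F)`: the minimum of `∑_{i ∈ I(T_v)} f i (d_i(G))` over subgraphs
`G ⊆ H[I(T_v)]` with `E(G[I_v]) = F` and `d_i(G) = c i` for all `i ∈ I_v`,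
with the convention that the minimum over the empty set is `∞`. -/
noncomputable def gval {n : ℕ} {H : SimpleGraph (Fin n)} (td : TreeDecomp n H)
    (f : Fin n → ℕ → ℤ) (v : td.τ) (c : Fin n → ℕ) (F : Set (Sym2 (Fin n))) :
    WithTop ℤ :=
  sInf {x : WithTop ℤ | ∃ G : SimpleGraph (Fin n), SubgraphOn H G (td.bags v) ∧
    edgesIn G (td.bag v) = F ∧ (∀ i ∈ td.bag v, deg G i = c i) ∧
    x = ((∑ i ∈ (Set.toFinite (td.bags v)).toFinset, f i (deg G i) : ℤ) : WithTop ℤ)}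

private lemma walk_exists_cons {V : Type*} {G : SimpleGraph V} {a b : V}
    (p : G.Walk a b) (h : a ≠ b) :
    ∃ (x : V) (hadj : G.Adj a x) (q : G.Walk x b), p = SimpleGraph.Walk.cons hadj q := by
  cases p with
  | nil => exact absurd rfl h
  | cons hadj q => exact ⟨_, hadj, q, rfl⟩

private lemma deg_lt {n : ℕ} (G : SimpleGraph (Fin n)) (j : Fin n) : deg G j < n := by
  have hsub : G.neighborSet j ⊆ {j}ᶜ := by
    intro x hx
    simp only [Set.mem_compl_iff, Set.mem_singleton_iff]
    rintro rfl
    exact G.irrefl hx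
  have h1 : deg G j ≤ ({j}ᶜ : Set (Fin n)).ncard :=
    Set.ncard_le_ncard hsub (Set.toFinite _)
  have h2 : ({j}ᶜ : Set (Fin n)).ncard < (Set.univ : Set (Fin n)).ncard := by
    refine Set.ncard_lt_ncard ?_ (Set.toFinite _)
    refine Set.ssubset_univ_iff.mpr ?_
    intro h
    have : j ∈ ({j}ᶜ : Set (Fin n)) := h ▸ Set.mem_univ j
    simp at this
  have h3 : (Set.univ : Set (Fin n)).ncard = n := by
    rw [Set.ncard_univ, Nat.card_eq_fintype_card, Fintype.card_fin]
  omega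

/-- Recursion at a forget node `v` with single child `u`, `I_u = I_v ⊎ {i}`:
`g(v, c, F)` is the minimum of `g(u, c_u, F_u)` over all `F_u ⊆ E(H[I_u])` with
`F_u ∩ E(H[I_v]) = F` and all `c_u` agreeing with `c` on `I_v` with
`c_u i ∈ {0,…,n-1}`. -/
theorem gval_forget {n : ℕ} {H : SimpleGraph (Fin n)} (td : TreeDecomp n H)
    (f : Fin n → ℕ → ℤ) (v u : td.τ) (hu : td.child v u)
    (honly : ∀ x, td.child v x → x = u)
    (i : Fin n) (hi : i ∉ td.bag v) (hbag : td.bag u = insert i (td.bag v))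
    (c : Fin n → ℕ) (F : Set (Sym2 (Fin n))) :
    gval td f v c F =
      sInf {y : WithTop ℤ | ∃ (Fu : Set (Sym2 (Fin n))) (cu : Fin n → ℕ),
        Fu ⊆ edgesIn H (td.bag u) ∧ Fu ∩ edgesIn H (td.bag v) = F ∧
        (∀ j ∈ td.bag v, cu j = c j) ∧ cu i < n ∧
        y = gval td f u cu Fu} := by
  classical
  obtain ⟨hadj_vu, hdesc_vu⟩ := hu
  have hT := td.isTree
  have huniq : ∀ (w : td.τ) (p q : td.tree.Walk td.root w), p.IsPath → q.IsPath → p = q := by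
    intro w p q hp hq
    exact ((hT.existsUnique_path td.root w).unique hp hq)
  -- from membership in some path to `desc`
  have hdesc_path : ∀ (w : td.τ) (p : td.tree.Walk td.root w), p.IsPath →
      ∀ x, x ∈ p.support → td.desc x w := by
    intro w p hp x hx q
    have hb : q.bypass = p := huniq w q.bypass p q.bypass_isPath hp
    have : x ∈ q.bypass.support := by rw [hb]; exact hx
    exact q.support_bypass_subset this
  have hdesc_uv : ∀ w, td.desc u w → td.desc v w := by
    intro w h q
    have hu' := h q
    have hv' := hdesc_vu (q.takeUntil u hu')
    exact q.support_takeUntil_subset hu' hv'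
  -- the hard direction: a proper descendant of `v` is a descendant of `u`
  have hdesc_vw : ∀ w, td.desc v w → w ≠ v → td.desc u w := by
    intro w h hw
    obtain ⟨p, hp, -⟩ := hT.existsUnique_path td.root w
    have hv : v ∈ p.support := h p
    have hp2 : (p.dropUntil v hv).IsPath := hp.dropUntil hv
    obtain ⟨x, hax, q, hq⟩ := walk_exists_cons (p.dropUntil v hv) (Ne.symm hw)
    have hxd : x ∈ (p.dropUntil v hv).support := by
      rw [hq, SimpleGraph.Walk.support_cons]
      exact List.mem_cons_of_mem _ q.start_mem_support
    have hxp : x ∈ p.support := p.support_dropUntil_subset hv hxd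
    have hdesc_xw : td.desc x w := hdesc_path w p hp x hxp
    have hvq : v ∉ q.support := by
      have := hp2.support_nodup
      rw [hq, SimpleGraph.Walk.support_cons] at this
      exact (List.nodup_cons.mp this).1
    have hdesc_vx : td.desc v x := by
      intro r
      have hvr : v ∈ (r.append q).support := h (r.append q)
      rw [SimpleGraph.Walk.support_append] at hvr
      rcases List.mem_append.mp hvr with h1 | h2
      · exact h1
      · exact absurd (List.mem_of_mem_tail h2) hvq
    have hx : x = u := honly x ⟨hax, hdesc_vx⟩
    rw [← hx]
    exact hdesc_xw
  have hdesc_uu : td.desc u u := fun q => q.end_mem_support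
  have hbv_sub : td.bag v ⊆ td.bag u := by
    rw [hbag]; exact Set.subset_insert _ _
  have hS : td.bags v = td.bags u := by
    ext j
    constructor
    · rintro ⟨w, hw, hj⟩
      by_cases hwv : w = v
      · subst hwv
        exact ⟨u, hdesc_uu, hbv_sub hj⟩
      · exact ⟨w, hdesc_vw w hw hwv, hj⟩
    · rintro ⟨w, hw, hj⟩
      exact ⟨w, hdesc_uv w hw, hj⟩
  have hFS : (Set.toFinite (td.bags v)).toFinset = (Set.toFinite (td.bags u)).toFinset := by
    ext j; simp [hS]
  have hedge : ∀ G : SimpleGraph (Fin n), G ≤ H →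
      edgesIn G (td.bag u) ∩ edgesIn H (td.bag v) = edgesIn G (td.bag v) := by
    intro G hGH
    ext e
    simp only [edgesIn, Set.mem_inter_iff, Set.mem_setOf_eq]
    constructor
    · rintro ⟨⟨heG, -⟩, -, hbv⟩
      exact ⟨heG, hbv⟩
    · rintro ⟨heG, hbv⟩
      exact ⟨⟨heG, fun j hj => hbv_sub (hbv j hj)⟩,
        SimpleGraph.edgeSet_mono hGH heG, hbv⟩
  -- explicit lower bound for all the sets involved
  have hn : 0 < n := i.pos
  have hrne : (Finset.range n).Nonempty := Finset.nonempty_range_iff.mpr hn.ne'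
  set M : ℤ := ∑ j ∈ (Set.toFinite (td.bags u)).toFinset, (Finset.range n).inf' hrne (f j)
    with hMdef
  have hMle : ∀ G : SimpleGraph (Fin n),
      M ≤ ∑ j ∈ (Set.toFinite (td.bags u)).toFinset, f j (deg G j) := by
    intro G
    refine Finset.sum_le_sum fun j _ => ?_
    exact Finset.inf'_le (f j) (Finset.mem_range.mpr (deg_lt G j))
  -- the three families of sets
  set A : Set (WithTop ℤ) := {x : WithTop ℤ | ∃ G : SimpleGraph (Fin n),
    SubgraphOn H G (td.bags v) ∧ edgesIn G (td.bag v) = F ∧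
    (∀ j ∈ td.bag v, deg G j = c j) ∧
    x = ((∑ j ∈ (Set.toFinite (td.bags v)).toFinset, f j (deg G j) : ℤ) : WithTop ℤ)} with hAdef
  have hgvalv : gval td f v c F = sInf A := rfl
  set B : (Fin n → ℕ) → Set (Sym2 (Fin n)) → Set (WithTop ℤ) := fun cu Fu =>
    {x : WithTop ℤ | ∃ G : SimpleGraph (Fin n),
      SubgraphOn H G (td.bags u) ∧ edgesIn G (td.bag u) = Fu ∧
      (∀ j ∈ td.bag u, deg G j = cu j) ∧
      x = ((∑ j ∈ (Set.toFinite (td.bags u)).toFinset, f j (deg G j) : ℤ) : WithTop ℤ)}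
    with hBdef
  have hgvalu : ∀ cu Fu, gval td f u cu Fu = sInf (B cu Fu) := fun _ _ => rfl
  set R : Set (WithTop ℤ) := {y : WithTop ℤ | ∃ (Fu : Set (Sym2 (Fin n))) (cu : Fin n → ℕ),
    Fu ⊆ edgesIn H (td.bag u) ∧ Fu ∩ edgesIn H (td.bag v) = F ∧
    (∀ j ∈ td.bag v, cu j = c j) ∧ cu i < n ∧ y = gval td f u cu Fu} with hRdef
  -- boundedness
  have hbddA : BddBelow A := by
    refine ⟨(M : WithTop ℤ), ?_⟩
    rintro x ⟨G, -, -, -, rfl⟩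
    rw [hFS]
    exact_mod_cast hMle G
  have hbddB : ∀ cu Fu, BddBelow (B cu Fu) := by
    intro cu Fu
    refine ⟨(M : WithTop ℤ), ?_⟩
    rintro x ⟨G, -, -, -, rfl⟩
    exact_mod_cast hMle G
  have hbddR : BddBelow R := by
    refine ⟨(M : WithTop ℤ), ?_⟩
    rintro y ⟨Fu, cu, -, -, -, -, rfl⟩
    rw [hgvalu]
    refine (WithTop.isGLB_sInf' (hbddB cu Fu)).2 ?_
    rintro x ⟨G, -, -, -, rfl⟩
    exact_mod_cast hMle G
  have glbA : IsGLB A (sInf A) := WithTop.isGLB_sInf' hbddA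
  have glbR : IsGLB R (sInf R) := WithTop.isGLB_sInf' hbddR
  rw [hgvalv]
  show sInf A = sInf R
  refine le_antisymm (glbR.2 ?_) (glbA.2 ?_)
  · -- sInf A is a lower bound of R
    rintro y ⟨Fu, cu, hFuH, hFuF, hcu, -, rfl⟩
    rw [hgvalu]
    refine (WithTop.isGLB_sInf' (hbddB cu Fu)).2 ?_
    rintro x ⟨G, hG, hE, hd, rfl⟩
    refine glbA.1 ⟨G, hS ▸ hG, ?_, ?_, ?_⟩
    · rw [← hFuF, ← hE, hedge G hG.1]
    · intro j hj
      rw [hd j (hbv_sub hj), hcu j hj]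
    · rw [hFS]
  · -- sInf R is a lower bound of A
    rintro x ⟨G, hG, hE, hd, rfl⟩
    have hGu : SubgraphOn H G (td.bags u) := hS ▸ hG
    set Fu : Set (Sym2 (Fin n)) := edgesIn G (td.bag u) with hFudef
    set cu : Fin n → ℕ := fun j => deg G j with hcudef
    have hmemR : gval td f u cu Fu ∈ R := by
      refine ⟨Fu, cu, ?_, ?_, ?_, deg_lt G i, rfl⟩
      · rintro e ⟨heG, hin⟩
        exact ⟨SimpleGraph.edgeSet_mono hG.1 heG, hin⟩
      · rw [hFudef, hedge G hG.1, hE]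
      · intro j hj
        exact hd j hj
    refine le_trans (glbR.1 hmemR) ?_
    rw [hgvalu]
    refine (WithTop.isGLB_sInf' (hbddB cu Fu)).1 ⟨G, hGu, rfl, fun j _ => rfl, ?_⟩
    rw [hFS]
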